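/- Let A be a probability group. Then for all a, b, c ∈ A, one has p(a·b = c⁻¹)·s(a) = p(b·c = a⁻¹)·s(c). -/
import Mathlib


/-- A probability group (Harrison): a set `A` with a distinguished element `one`,
an inverse map `inv`, and a probability map `p` satisfying axioms (1)-(6). -/
structure ProbabilityGroup (A : Type*) where
  /-- the probability map: `p a b c` is `p(a·b = c)` -/
  p : A → A → A → ℝ
  /-- the unit element -/
  one : A
  /-- the inverse map -/
  inv : A → A
  p_nonneg : ∀ a b c, 0 ≤ p a b c
  finite_support : ∀ a b, {c | p a b c ≠ 0}.Finite
  sum_eq_one : ∀ a b, ∑ᶠ c, p a b c = 1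
  assoc : ∀ a b c d, ∑ᶠ x, p a b x * p x c d = ∑ᶠ y, p a y d * p b c y
  one_mul : ∀ a, p one a a = 1
  mul_one : ∀ a, p a one a = 1
  inv_pos : ∀ a, 0 < p a (inv a) one
  inv_unique : ∀ a b, 0 < p a b one → b = inv a
  p_inv : ∀ a b c, p a b c = p (inv b) (inv a) (inv c)
  inv_symm : ∀ a, p a (inv a) one = p (inv a) a one

/-- The size `s(a) = 1 / p(a·a⁻¹ = 1)` of an element of a probability group. -/
noncomputable def ProbabilityGroup.s {A : Type*} (P : ProbabilityGroup A) (a : A) : ℝ :=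
  1 / P.p a (P.inv a) P.one

namespace ProbabilityGroup

variable {A : Type*} (P : ProbabilityGroup A)

lemma inv_one : P.inv P.one = P.one :=
  (P.inv_unique P.one P.one (by rw [P.one_mul]; norm_num)).symm

lemma inv_inv (a : A) : P.inv (P.inv a) = a :=
  (P.inv_unique (P.inv a) a (by rw [← P.inv_symm]; exact P.inv_pos a)).symm

/-- left uniqueness of inverses -/
lemma inv_unique_left (x c : A) (h : 0 < P.p x c P.one) : x = P.inv c := by
  rw [P.p_inv, P.inv_one] at h
  have := P.inv_unique _ _ h
  have h2 := congrArg P.inv this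
  rwa [P.inv_inv, P.inv_inv] at h2

end ProbabilityGroup

/-- For all `a, b, c` in a probability group, `p(a·b = c⁻¹)·s(a) = p(b·c = a⁻¹)·s(c)`. -/
theorem probabilityGroup_size_identity {A : Type*} (P : ProbabilityGroup A) (a b c : A) :
    P.p a b (P.inv c) * P.s a = P.p b c (P.inv a) * P.s c := by
  have key := P.assoc a b c P.one
  have hL : (∑ᶠ x, P.p a b x * P.p x c P.one)
      = P.p a b (P.inv c) * P.p (P.inv c) c P.one := by
    apply finsum_eq_single
    intro x hx
    have hz : P.p x c P.one = 0 := by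
      by_contra h
      exact hx (P.inv_unique_left x c (lt_of_le_of_ne (P.p_nonneg _ _ _) (Ne.symm h)))
    rw [hz, mul_zero]
  have hR : (∑ᶠ y, P.p a y P.one * P.p b c y)
      = P.p a (P.inv a) P.one * P.p b c (P.inv a) := by
    apply finsum_eq_single
    intro y hy
    have hz : P.p a y P.one = 0 := by
      by_contra h
      exact hy (P.inv_unique a y (lt_of_le_of_ne (P.p_nonneg _ _ _) (Ne.symm h)))
    rw [hz, zero_mul]
  rw [hL, hR] at key
  rw [← P.inv_symm] at key
  have hc : P.p c (P.inv c) P.one ≠ 0 := ne_of_gt (P.inv_pos c)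
  have ha : P.p a (P.inv a) P.one ≠ 0 := ne_of_gt (P.inv_pos a)
  unfold ProbabilityGroup.s
  field_simp
  linarith [key]
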